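/- For every real p with 0 < p < 1 and every positive integer n, there exist a positive integer m and a matrix A with entries in {0,1}, having n rows and m columns, such that for every vector x ∈ {0,1}^m one has ‖A(p·𝟏 − x)‖_∞ ≥ √(n−1)/16 (where 𝟏 is the all-ones vector in ℝ^m). Equivalently, the maximum over matrices of the p-weighted discrepancy satisfies wdisc^max_p(n) ≥ √(n−1)/16. -/

import Mathlib

open Finset

namespace WdiscAux

noncomputable def chi (k : ℕ) (a b : Fin k → Bool) : ℝ :=
  ∏ i, if a i && b i then (-1:ℝ) else 1

noncomputable def Bm (k : ℕ) (a b : Fin k → Bool) : ℝ := (1 + chi k a b) / 2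

lemma chi_eq_one_or (k : ℕ) (a b : Fin k → Bool) : chi k a b = 1 ∨ chi k a b = -1 := by
  have h : chi k a b * chi k a b = 1 := by
    rw [chi, ← Finset.prod_mul_distrib]
    apply Finset.prod_eq_one
    intro i _
    split_ifs <;> norm_num
  exact mul_self_eq_one_iff.mp h

lemma chi_mul (k : ℕ) (a b b' : Fin k → Bool) :
    chi k a b * chi k a b' = chi k a (fun i => xor (b i) (b' i)) := by
  rw [chi, chi, chi, ← Finset.prod_mul_distrib]
  apply Finset.prod_congr rfl
  intro i _
  cases a i <;> cases b i <;> cases b' i <;> norm_num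

lemma sum_chi (k : ℕ) (b : Fin k → Bool) :
    ∑ a : Fin k → Bool, chi k a b
      = if b = (fun _ => false) then ((2:ℝ))^k else 0 := by
  have h : ∑ a : Fin k → Bool, chi k a b
      = ∏ i, ∑ t : Bool, (if t && b i then (-1:ℝ) else 1) := by
    simp only [chi]
    exact (Fintype.prod_sum (fun i (t : Bool) => if t && b i then (-1:ℝ) else 1)).symm
  rw [h]
  by_cases hb : b = (fun _ => false)
  · subst hb
    simp
  · rw [if_neg hb]
    have : ∃ i, b i = true := by
      by_contra hc
      push_neg at hc
      exact hb (funext fun i => by simpa using hc i)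
    obtain ⟨i, hi⟩ := this
    apply Finset.prod_eq_zero (Finset.mem_univ i)
    simp [hi]

lemma sum_Bm_mul_Bm (k : ℕ) (b b' : Fin k → Bool) :
    ∑ a : Fin k → Bool, Bm k a b * Bm k a b'
      = ((2:ℝ)^k + (if b = (fun _ => false) then (2:ℝ)^k else 0)
          + (if b' = (fun _ => false) then (2:ℝ)^k else 0)
          + (if b = b' then (2:ℝ)^k else 0)) / 4 := by
  have hexp : ∀ a, Bm k a b * Bm k a b'
      = (1 + chi k a b + chi k a b' + chi k a (fun i => xor (b i) (b' i))) / 4 := by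
    intro a
    rw [Bm, Bm, ← chi_mul]
    ring
  simp only [hexp]
  rw [← Finset.sum_div]
  rw [Finset.sum_add_distrib, Finset.sum_add_distrib, Finset.sum_add_distrib]
  rw [sum_chi, sum_chi, sum_chi]
  have hcard : (Finset.univ : Finset (Fin k → Bool)).card = 2^k := by
    simp [Fintype.card_fun]
  have hxor : ((fun i => xor (b i) (b' i)) = (fun _ => false)) ↔ b = b' := by
    constructor
    · intro h
      funext i
      have := congrFun h i
      cases hbi : b i <;> cases hbi' : b' i <;> simp_all
    · intro h
      subst h
      funext i
      simp
  rw [if_congr hxor rfl rfl]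
  simp [hcard]

lemma exists_big_row (k : ℕ) (c : (Fin k → Bool) → ℝ)
    (hc : ∀ b, (1:ℝ)/4 ≤ |c b|) :
    ∃ a : Fin k → Bool, ((2:ℝ)^k - 1)/64 ≤ (∑ b, Bm k a b * c b)^2 := by
  classical
  set z : Fin k → Bool := fun _ => false with hz
  set N : ℝ := (2:ℝ)^k with hNdef
  set S : ℝ := ∑ b, c b with hS
  have hsq : ∑ a : Fin k → Bool, (∑ b, Bm k a b * c b)^2
      = (N/4) * ((S + c z)^2 + ((∑ b, (c b)^2) - (c z)^2)) := by
    have h1 : ∀ a : Fin k → Bool, (∑ b, Bm k a b * c b)^2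
        = ∑ b, ∑ b', (Bm k a b * Bm k a b') * (c b * c b') := by
      intro a
      rw [sq, Finset.sum_mul_sum]
      apply Finset.sum_congr rfl; intro b _
      apply Finset.sum_congr rfl; intro b' _
      ring
    simp only [h1]
    rw [Finset.sum_comm]
    have h2 : ∀ b : Fin k → Bool,
        ∑ a : Fin k → Bool, ∑ b', (Bm k a b * Bm k a b') * (c b * c b')
          = ∑ b' : Fin k → Bool,
              ((N + (if b = z then N else 0) + (if b' = z then N else 0)
                + (if b = b' then N else 0)) / 4) * (c b * c b') := by
      intro b
      rw [Finset.sum_comm]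
      apply Finset.sum_congr rfl; intro b' _
      rw [← Finset.sum_mul, sum_Bm_mul_Bm]
    simp only [h2]
    have h3 : ∀ b b' : Fin k → Bool,
        ((N + (if b = z then N else 0) + (if b' = z then N else 0)
          + (if b = b' then N else 0)) / 4) * (c b * c b')
          = (N/4) * (c b * c b')
            + (if b = z then (N/4) * (c b * c b') else 0)
            + (if b' = z then (N/4) * (c b * c b') else 0)
            + (if b = b' then (N/4) * (c b * c b') else 0) := by
      intro b b'
      split_ifs <;> ring
    simp only [h3]
    simp only [Finset.sum_add_distrib]
    have hT1 : ∑ b : Fin k → Bool, ∑ b' : Fin k → Bool, (N/4) * (c b * c b')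
        = (N/4) * (S * S) := by
      rw [Finset.sum_mul_sum (s := (Finset.univ : Finset (Fin k → Bool)))
        (t := (Finset.univ : Finset (Fin k → Bool))) (f := c) (g := c)]
      rw [Finset.mul_sum]
      apply Finset.sum_congr rfl; intro b _
      rw [Finset.mul_sum]
    have hT2 : ∑ b : Fin k → Bool,
        ∑ b' : Fin k → Bool, (if b = z then (N/4) * (c b * c b') else 0)
        = (N/4) * (c z * S) := by
      rw [Finset.sum_comm]
      have : ∀ b' : Fin k → Bool,
          ∑ b : Fin k → Bool, (if b = z then (N/4) * (c b * c b') else 0)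
            = (N/4) * (c z * c b') := by
        intro b'
        simp [Finset.sum_ite_eq']
      simp only [this]
      rw [← Finset.mul_sum, ← Finset.mul_sum]
    have hT3 : ∑ b : Fin k → Bool,
        ∑ b' : Fin k → Bool, (if b' = z then (N/4) * (c b * c b') else 0)
        = (N/4) * (S * c z) := by
      have : ∀ b : Fin k → Bool,
          ∑ b' : Fin k → Bool, (if b' = z then (N/4) * (c b * c b') else 0)
            = (N/4) * (c b * c z) := by
        intro b
        simp [Finset.sum_ite_eq']
      simp only [this]
      rw [← Finset.mul_sum, ← Finset.sum_mul]
    have hT4 : ∑ b : Fin k → Bool,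
        ∑ b' : Fin k → Bool, (if b = b' then (N/4) * (c b * c b') else 0)
        = (N/4) * (∑ b, (c b)^2) := by
      have : ∀ b : Fin k → Bool,
          ∑ b' : Fin k → Bool, (if b = b' then (N/4) * (c b * c b') else 0)
            = (N/4) * (c b)^2 := by
        intro b
        simp [Finset.sum_ite_eq, sq]
      simp only [this]
      rw [← Finset.mul_sum]
    rw [hT1, hT2, hT3, hT4]
    ring
  have hbound : (N - 1)/16 ≤ (∑ b, (c b)^2) - (c z)^2 := by
    have herase : ∑ b, (c b)^2
        = (c z)^2 + ∑ b ∈ Finset.univ.erase z, (c b)^2 :=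
      (Finset.add_sum_erase _ _ (Finset.mem_univ z)).symm
    have hcard : (Finset.univ.erase z).card = 2^k - 1 := by
      rw [Finset.card_erase_of_mem (Finset.mem_univ z), Finset.card_univ]
      simp [Fintype.card_fun]
    have hterm : ∀ b ∈ Finset.univ.erase z, (1:ℝ)/16 ≤ (c b)^2 := by
      intro b _
      have h := hc b
      nlinarith [sq_abs (c b)]
    have hsum := Finset.card_nsmul_le_sum (Finset.univ.erase z)
      (fun b => (c b)^2) ((1:ℝ)/16) hterm
    rw [hcard, nsmul_eq_mul] at hsum
    have hcast : ((2^k - 1 : ℕ) : ℝ) = N - 1 := by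
      rw [Nat.cast_sub Nat.one_le_two_pow]
      push_cast
      rw [hNdef]
    rw [hcast] at hsum
    linarith [herase, hsum]
  have hN0 : 0 < N := by rw [hNdef]; positivity
  have htot : N * ((N - 1)/64) ≤ ∑ a : Fin k → Bool, (∑ b, Bm k a b * c b)^2 := by
    rw [hsq]
    nlinarith [sq_nonneg (S + c z)]
  by_contra hcon
  push_neg at hcon
  have hlt : ∑ a : Fin k → Bool, (∑ b, Bm k a b * c b)^2
      < ∑ _a : Fin k → Bool, (N - 1)/64 :=
    Finset.sum_lt_sum_of_nonempty Finset.univ_nonempty (fun a _ => hcon a)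
  rw [Finset.sum_const, Finset.card_univ, nsmul_eq_mul] at hlt
  have hcard2 : ((Fintype.card (Fin k → Bool) : ℕ) : ℝ) = N := by
    simp [Fintype.card_fun, hNdef]
  rw [hcard2] at hlt
  linarith

end WdiscAux

lemma far_of_frac (w : ℤ) (r : ℝ) (h1 : 1/4 ≤ r) (h2 : r ≤ 3/4) (z : ℤ) :
    (1:ℝ)/4 ≤ |((w : ℝ) + r) - z| := by
  rcases le_or_gt 0 (w - z) with hd | hd
  · have : (0:ℝ) ≤ (w : ℝ) - z := by exact_mod_cast sub_nonneg.mpr (sub_nonneg.mp hd)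
    have := le_abs_self (((w : ℝ) + r) - z)
    linarith
  · have hle : w - z ≤ -1 := by omega
    have : ((w : ℝ)) - z ≤ -1 := by exact_mod_cast hle
    have := neg_abs_le (((w : ℝ) + r) - z)
    linarith

lemma exists_t (p : ℝ) (hp0 : 0 < p) (hp1 : p < 1) :
    ∃ t : ℕ, 0 < t ∧ ∀ z : ℤ, (1:ℝ)/4 ≤ |(t : ℝ) * p - z| := by
  by_cases h4 : p < 1/4
  · set t : ℕ := ⌈1/(4*p)⌉₊ with ht
    have hpos : (0:ℝ) < 1/(4*p) := by positivity
    have ht0 : 0 < t := Nat.ceil_pos.mpr hpos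
    have hge : 1/(4*p) ≤ (t:ℝ) := Nat.le_ceil _
    have hlt : (t:ℝ) < 1/(4*p) + 1 := Nat.ceil_lt_add_one hpos.le
    have hr1 : 1/4 ≤ (t:ℝ) * p := by
      have := mul_le_mul_of_nonneg_right hge hp0.le
      have h14 : (1/(4*p)) * p = 1/4 := by field_simp
      nlinarith
    have hr2 : (t:ℝ) * p ≤ 3/4 := by
      have := mul_lt_mul_of_pos_right hlt hp0
      have h14 : (1/(4*p)) * p = 1/4 := by field_simp
      nlinarith
    refine ⟨t, ht0, fun z => ?_⟩
    have := far_of_frac 0 ((t:ℝ)*p) hr1 hr2 z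
    simpa using this
  · by_cases h4' : 3/4 < p
    · set q : ℝ := 1 - p with hq
      have hq0 : 0 < q := by rw [hq]; linarith
      have hq4 : q < 1/4 := by rw [hq]; linarith
      set t : ℕ := ⌈1/(4*q)⌉₊ with ht
      have hpos : (0:ℝ) < 1/(4*q) := by positivity
      have ht0 : 0 < t := Nat.ceil_pos.mpr hpos
      have hge : 1/(4*q) ≤ (t:ℝ) := Nat.le_ceil _
      have hlt : (t:ℝ) < 1/(4*q) + 1 := Nat.ceil_lt_add_one hpos.le
      have hr1 : 1/4 ≤ (t:ℝ) * q := by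
        have := mul_le_mul_of_nonneg_right hge hq0.le
        have h14 : (1/(4*q)) * q = 1/4 := by field_simp
        nlinarith
      have hr2 : (t:ℝ) * q ≤ 1/2 := by
        have := mul_lt_mul_of_pos_right hlt hq0
        have h14 : (1/(4*q)) * q = 1/4 := by field_simp
        nlinarith
      refine ⟨t, ht0, fun z => ?_⟩
      have key := far_of_frac ((t:ℤ) - 1) (1 - (t:ℝ)*q) (by linarith) (by linarith) z
      have heq : (((t:ℤ) - 1 : ℤ) : ℝ) + (1 - (t:ℝ)*q) = (t:ℝ) * p := by
        push_cast
        rw [hq]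
        ring
      rwa [heq] at key
    · push_neg at h4 h4'
      refine ⟨1, one_pos, fun z => ?_⟩
      have := far_of_frac 0 p h4 h4' z
      simpa using this

open WdiscAux

/-- For every real `p` with `0 < p < 1` and every positive integer `n`,
there exist a positive integer `m` and a matrix `A ∈ {0,1}^{n×m}` such that for every
vector `x ∈ {0,1}^m`, `‖A(p·𝟏 − x)‖_∞ ≥ √(n−1)/16`.  (Since `n > 0`, the `∞`-norm bound
is expressed as the existence of a coordinate of absolute value at least `√(n−1)/16`.)
Equivalently, `wdisc^max_p(n) ≥ √(n−1)/16`. -/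
theorem wdisc_lower_bound (p : ℝ) (hp0 : 0 < p) (hp1 : p < 1) (n : ℕ) (hn : 0 < n) :
    ∃ (m : ℕ), 0 < m ∧ ∃ A : Matrix (Fin n) (Fin m) ℝ,
      (∀ i j, A i j = 0 ∨ A i j = 1) ∧
      ∀ x : Fin m → ℝ, (∀ j, x j = 0 ∨ x j = 1) →
        ∃ i : Fin n,
          Real.sqrt ((n : ℝ) - 1) / 16 ≤ |A.mulVec (fun j => p - x j) i| := by
  classical
  set k : ℕ := Nat.log 2 n with hk
  have hNle : 2^k ≤ n := Nat.pow_log_le_self 2 hn.ne'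
  have hnlt : n < 2^(k+1) := Nat.lt_pow_succ_log_self (by norm_num) n
  obtain ⟨t, ht0, hfar⟩ := exists_t p hp0 hp1
  have ecard : Fintype.card (Fin k → Bool) = 2^k := by simp [Fintype.card_fun]
  set e : (Fin k → Bool) ≃ Fin (2^k) := Fintype.equivFinOfCardEq ecard with he
  set g : Fin (2^k * t) ≃ (Fin k → Bool) × Fin t :=
    finProdFinEquiv.symm.trans (Equiv.prodCongr e.symm (Equiv.refl (Fin t))) with hg
  refine ⟨2^k * t, by positivity,
    fun i j => if h : (i : ℕ) < 2^k then Bm k (e.symm ⟨(i:ℕ), h⟩) (g j).1 else 0, ?_, ?_⟩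
  · intro i j
    dsimp only
    split_ifs with h
    · rcases chi_eq_one_or k (e.symm ⟨(i:ℕ), h⟩) (g j).1 with hx | hx <;>
        rw [Bm, hx] <;> norm_num
    · left; rfl
  · intro x hx
    set c : (Fin k → Bool) → ℝ := fun b => ∑ s : Fin t, (p - x (g.symm (b, s))) with hcdef
    have hc : ∀ b, (1:ℝ)/4 ≤ |c b| := by
      intro b
      set zint : ℤ := ∑ s : Fin t, (if x (g.symm (b, s)) = 1 then (1:ℤ) else 0) with hzint
      have hcx : c b = (t:ℝ) * p - (zint:ℝ) := by
        rw [hcdef]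
        dsimp only
        rw [Finset.sum_sub_distrib, Finset.sum_const, Finset.card_univ, Fintype.card_fin,
          nsmul_eq_mul]
        congr 1
        rw [hzint]
        push_cast
        apply Finset.sum_congr rfl
        intro s _
        rcases hx (g.symm (b, s)) with h0 | h1
        · rw [h0]; norm_num
        · simp [h1]
      rw [hcx]; exact hfar zint
    obtain ⟨a, ha⟩ := exists_big_row k c hc
    refine ⟨Fin.castLE hNle (e a), ?_⟩
    have hlt2 : ((Fin.castLE hNle (e a) : Fin n) : ℕ) < 2^k := (e a).isLt
    have hsa : e.symm ⟨((Fin.castLE hNle (e a) : Fin n) : ℕ), hlt2⟩ = a := by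
      have hfin : (⟨((Fin.castLE hNle (e a) : Fin n) : ℕ), hlt2⟩ : Fin (2^k)) = e a := rfl
      rw [hfin, Equiv.symm_apply_apply]
    have hrow : Matrix.mulVec
        ((fun i j => if h : (i : ℕ) < 2^k then Bm k (e.symm ⟨(i:ℕ), h⟩) (g j).1 else 0) :
          Matrix (Fin n) (Fin (2^k * t)) ℝ)
        (fun j => p - x j) (Fin.castLE hNle (e a)) = ∑ b, Bm k a b * c b := by
      simp only [Matrix.mulVec, dotProduct]
      simp only [dif_pos hlt2, hsa]
      calc ∑ j, Bm k a (g j).1 * (p - x j)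
          = ∑ q : (Fin k → Bool) × Fin t, Bm k a q.1 * (p - x (g.symm q)) := by
            rw [← Equiv.sum_comp g (fun q => Bm k a q.1 * (p - x (g.symm q)))]
            apply Finset.sum_congr rfl
            intro j _
            simp
        _ = ∑ b, ∑ s, Bm k a b * (p - x (g.symm (b, s))) := Fintype.sum_prod_type _
        _ = ∑ b, Bm k a b * c b := by
            apply Finset.sum_congr rfl
            intro b _
            rw [hcdef, Finset.mul_sum]
    rw [hrow]
    have hn1 : (1:ℝ) ≤ n := by exact_mod_cast hn
    have h2k : (n:ℝ) + 3 ≤ 4 * (2:ℝ)^k := by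
      have h1 : n + 1 ≤ 2^(k+1) := hnlt
      have h2 : ((n:ℝ) + 1) ≤ (2:ℝ)^k * 2 := by
        have := (Nat.cast_le (α := ℝ)).mpr h1
        push_cast at this
        rw [pow_succ] at this
        linarith
      linarith
    have hq : ((n:ℝ) - 1)/256 ≤ (∑ b, Bm k a b * c b)^2 := by linarith
    have hs := Real.sqrt_le_sqrt hq
    rw [Real.sqrt_sq_eq_abs] at hs
    have hdiv : Real.sqrt (((n:ℝ)-1)/256) = Real.sqrt ((n:ℝ)-1)/16 := by
      rw [Real.sqrt_div (by linarith : (0:ℝ) ≤ (n:ℝ)-1),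
        show (256:ℝ) = 16^2 by norm_num, Real.sqrt_sq (by norm_num : (0:ℝ) ≤ 16)]
    rw [hdiv] at hs
    exact hs
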